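/- arXiv:2506.18397 — 3 statements merged into one kernel-verified Lean document; each statement's English description precedes it below -/
import Mathlib

section
/- Let ω ∈ (0,1], let J be a finite index set, and for each j ∈ J let w_j > 0, m_j ∈ ℝⁿ, and P_j an n×n real positive definite matrix. Then for every x ∈ ℝⁿ, (∑_{j ∈ J} w_j · N(x; m_j, P_j))^ω ≤ ∑_{j ∈ J} (w_j)^ω · κ(ω, P_j) · N(x; m_j, P_j/ω), where N(x; m, P) := ((2π)^n · det P)^(−1/2) · exp(−(1/2)·(x−m)ᵀ P⁻¹ (x−m)) and κ(ω,P) := ((2π/ω)^n · det P)^(1/2) / (((2π)^n · det P))^(ω/2). That is, the ω-power of a Gaussian mixture intensity is pointwise upper bounded by the Gaussian mixture with weights (w_j)^ω κ(ω,P_j), means m_j, and covariances P_j/ω. -/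
open MeasureTheory Matrix

/-- Multivariate Gaussian density `N(x; m, P)` on ℝⁿ. -/
noncomputable def gaussianPDF {n : ℕ} (m : Fin n → ℝ) (P : Matrix (Fin n) (Fin n) ℝ)
    (x : Fin n → ℝ) : ℝ :=
  ((2 * Real.pi) ^ n * P.det) ^ (-(1 : ℝ) / 2) *
    Real.exp (-(1 / 2 : ℝ) * ((x - m) ⬝ᵥ (P⁻¹ *ᵥ (x - m))))

/-- The constant `κ(ω, P)`, the total mass of the ω-power of a Gaussian density. -/
noncomputable def kappa {n : ℕ} (ω : ℝ) (P : Matrix (Fin n) (Fin n) ℝ) : ℝ :=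
  ((2 * Real.pi / ω) ^ n * P.det) ^ ((1 : ℝ) / 2) /
    ((2 * Real.pi) ^ n * P.det) ^ (ω / 2)

lemma my_rpow_add_le {p : ℝ} (hp : 0 ≤ p) (hp1 : p ≤ 1) {a b : ℝ}
    (ha : 0 ≤ a) (hb : 0 ≤ b) : (a + b) ^ p ≤ a ^ p + b ^ p := by
  have h := NNReal.rpow_add_le_add_rpow a.toNNReal b.toNNReal hp hp1
  rw [← Real.toNNReal_add ha hb] at h
  have h2 := NNReal.coe_le_coe.2 h
  push_cast [NNReal.coe_rpow] at h2
  rwa [Real.coe_toNNReal _ (add_nonneg ha hb), Real.coe_toNNReal _ ha,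
    Real.coe_toNNReal _ hb] at h2

lemma my_rpow_sum_le {J : Type*} {p : ℝ} (hp : 0 < p) (hp1 : p ≤ 1) (s : Finset J)
    (f : J → ℝ) (hf : ∀ j ∈ s, 0 ≤ f j) :
    (∑ j ∈ s, f j) ^ p ≤ ∑ j ∈ s, f j ^ p := by
  classical
  induction s using Finset.induction with
  | empty => simp [Real.zero_rpow hp.ne']
  | insert j t hj ih =>
    rw [Finset.sum_insert hj, Finset.sum_insert hj]
    have h1 : 0 ≤ f j := hf j (Finset.mem_insert_self _ _)
    have h2 : ∀ k ∈ t, 0 ≤ f k := fun k hk => hf k (Finset.mem_insert_of_mem hk)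
    exact (my_rpow_add_le hp.le hp1 h1 (Finset.sum_nonneg h2)).trans
      (add_le_add_right (ih h2) _)

lemma gaussianPDF_nonneg {n : ℕ} (m : Fin n → ℝ) (P : Matrix (Fin n) (Fin n) ℝ)
    (hP : P.PosDef) (x : Fin n → ℝ) : 0 ≤ gaussianPDF m P x := by
  have hD : (0:ℝ) ≤ (2 * Real.pi) ^ n * P.det :=
    mul_nonneg (pow_nonneg (by positivity) n) hP.det_pos.le
  exact mul_nonneg (Real.rpow_nonneg hD _) (Real.exp_pos _).le

lemma gaussian_rpow {n : ℕ} (ω : ℝ) (hω0 : 0 < ω) (m : Fin n → ℝ)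
    (P : Matrix (Fin n) (Fin n) ℝ) (hP : P.PosDef) (x : Fin n → ℝ) :
    gaussianPDF m P x ^ ω = kappa ω P * gaussianPDF m (ω⁻¹ • P) x := by
  have hπ : (0:ℝ) < 2 * Real.pi := by positivity
  have hD : (0:ℝ) < (2 * Real.pi) ^ n * P.det :=
    mul_pos (pow_pos hπ n) hP.det_pos
  have hE : (0:ℝ) < (2 * Real.pi / ω) ^ n * P.det :=
    mul_pos (pow_pos (by positivity) n) hP.det_pos
  set D := (2 * Real.pi) ^ n * P.det with hDdef
  set E := (2 * Real.pi / ω) ^ n * P.det with hEdef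
  set q := (x - m) ⬝ᵥ (P⁻¹ *ᵥ (x - m)) with hqdef
  -- inverse of scaled matrix
  letI : Invertible (ω⁻¹ : ℝ) := invertibleOfNonzero (inv_ne_zero hω0.ne')
  have hinv : (ω⁻¹ • P)⁻¹ = ω • P⁻¹ := by
    have h := Matrix.inv_smul (A := P) (k := ω⁻¹) hP.det_pos.ne'.isUnit
    rwa [invOf_eq_inv, inv_inv] at h
  have hdet : (ω⁻¹ • P).det = (ω⁻¹) ^ n * P.det := by
    rw [Matrix.det_smul, Fintype.card_fin]
  have hEeq : (2 * Real.pi) ^ n * (ω⁻¹ • P).det = E := by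
    rw [hdet, hEdef, div_pow, div_eq_mul_inv, ← inv_pow]
    ring
  have hq' : (x - m) ⬝ᵥ ((ω⁻¹ • P)⁻¹ *ᵥ (x - m)) = ω * q := by
    rw [hinv, smul_mulVec, dotProduct_smul, smul_eq_mul]
  unfold gaussianPDF kappa
  rw [hq', hEeq]
  rw [Real.mul_rpow (Real.rpow_nonneg hD.le _) (Real.exp_pos _).le]
  rw [← Real.rpow_natCast (2 * Real.pi) n] -- may not be needed; keep D folded
  rw [Real.rpow_natCast]
  rw [← Real.rpow_mul hD.le, ← Real.exp_mul]
  have key : E ^ ((1:ℝ)/2) / D ^ (ω/2) * (E ^ (-(1:ℝ)/2) * Real.exp (-(1/2 : ℝ) * (ω * q)))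
      = D ^ (-(1:ℝ)/2 * ω) * Real.exp (-(1/2 : ℝ) * q * ω) := by
    have hcancel : E ^ ((1:ℝ)/2) * E ^ (-(1:ℝ)/2) = 1 := by
      rw [← Real.rpow_add hE]
      norm_num
    have hDexp : D ^ (-(1:ℝ)/2 * ω) = 1 / D ^ (ω/2) := by
      rw [one_div, ← Real.rpow_neg hD.le]
      ring_nf
    have hexp : Real.exp (-(1/2 : ℝ) * (ω * q)) = Real.exp (-(1/2 : ℝ) * q * ω) := by
      ring_nf
    rw [hexp, hDexp]
    have hre : E ^ ((1:ℝ)/2) / D ^ (ω/2) * (E ^ (-(1:ℝ)/2) * Real.exp (-(1/2 : ℝ) * q * ω))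
        = (E ^ ((1:ℝ)/2) * E ^ (-(1:ℝ)/2)) * (Real.exp (-(1/2 : ℝ) * q * ω) / D ^ (ω/2)) := by
      ring
    rw [hre, hcancel]
    ring
  rw [← key]

/-- The ω-power of a Gaussian mixture intensity is pointwise upper bounded by the
Gaussian mixture with weights `(w j)^ω κ(ω, P j)`, means `m j` and covariances `P j / ω`. -/
theorem rpow_gaussian_mixture_le {n : ℕ} {J : Type*} (ω : ℝ) (hω : ω ∈ Set.Ioc (0 : ℝ) 1)
    (s : Finset J) (w : J → ℝ) (m : J → Fin n → ℝ)
    (P : J → Matrix (Fin n) (Fin n) ℝ)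
    (hw : ∀ j ∈ s, 0 < w j) (hP : ∀ j ∈ s, (P j).PosDef) :
    ∀ x, (∑ j ∈ s, w j * gaussianPDF (m j) (P j) x) ^ ω ≤
      ∑ j ∈ s, w j ^ ω * kappa ω (P j) * gaussianPDF (m j) (ω⁻¹ • P j) x := by
  intro x
  obtain ⟨hω0, hω1⟩ := hω
  calc (∑ j ∈ s, w j * gaussianPDF (m j) (P j) x) ^ ω
      ≤ ∑ j ∈ s, (w j * gaussianPDF (m j) (P j) x) ^ ω :=
        my_rpow_sum_le hω0 hω1 s _ (fun j hj =>
          mul_nonneg (hw j hj).le (gaussianPDF_nonneg _ _ (hP j hj) x))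
    _ = ∑ j ∈ s, w j ^ ω * kappa ω (P j) * gaussianPDF (m j) (ω⁻¹ • P j) x := by
        refine Finset.sum_congr rfl fun j hj => ?_
        rw [Real.mul_rpow (hw j hj).le (gaussianPDF_nonneg _ _ (hP j hj) x),
          gaussian_rpow ω hω0 (m j) (P j) (hP j hj) x, mul_assoc]
end

section
/- Let ω ∈ (0,1], r ∈ [0,1], m ∈ ℝⁿ, and P an n×n real positive definite matrix. Set κ := κ(ω,P), c := (1−r)^ω + r^ω · κ, and r_q := r^ω · κ / c. Then c > 0, r_q ∈ [0,1], (1−r)^ω = c·(1−r_q), and for every x ∈ ℝⁿ, (r · N(x; m, P))^ω = c · r_q · N(x; m, P/ω). That is, the ω-power of a Gaussian Bernoulli density with existence probability r and single-object density N(·; m, P) equals c times the Bernoulli density with existence probability r_q and single-object density N(·; m, P/ω). -/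
open MeasureTheory Matrix

/-- The ω-power of a Gaussian Bernoulli density with existence probability `r` and
single-object density `N(·; m, P)` equals `c` times the Bernoulli density with existence
probability `rq` and single-object density `N(·; m, P/ω)`. -/
theorem power_gaussian_bernoulli {n : ℕ} (ω : ℝ) (hω : ω ∈ Set.Ioc (0 : ℝ) 1)
    (r : ℝ) (hr : r ∈ Set.Icc (0 : ℝ) 1)
    (m : Fin n → ℝ) (P : Matrix (Fin n) (Fin n) ℝ) (hP : P.PosDef)
    (κ c rq : ℝ)
    (hκ : κ = kappa ω P)
    (hc : c = (1 - r) ^ ω + r ^ ω * κ)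
    (hrq : rq = r ^ ω * κ / c) :
    0 < c ∧
    rq ∈ Set.Icc (0 : ℝ) 1 ∧
    (1 - r) ^ ω = c * (1 - rq) ∧
    ∀ x, (r * gaussianPDF m P x) ^ ω = c * rq * gaussianPDF m (ω⁻¹ • P) x := by
  have hω0 : (0:ℝ) < ω := hω.1
  have hdet : (0:ℝ) < P.det := hP.det_pos
  have hA : (0:ℝ) < (2 * Real.pi) ^ n * P.det := by positivity
  have hB : (0:ℝ) < (2 * Real.pi / ω) ^ n * P.det := by positivity
  have hκpos : 0 < κ := by
    rw [hκ, kappa]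
    exact div_pos (Real.rpow_pos_of_pos hB _) (Real.rpow_pos_of_pos hA _)
  have hcpos : 0 < c := by
    rcases lt_or_eq_of_le hr.2 with h1 | h1
    · have : 0 < (1 - r) ^ ω := Real.rpow_pos_of_pos (by linarith) ω
      have : 0 ≤ r ^ ω * κ := mul_nonneg (Real.rpow_nonneg hr.1 ω) hκpos.le
      rw [hc]; linarith
    · subst h1
      rw [hc]
      norm_num [Real.zero_rpow hω0.ne', Real.one_rpow]
      exact hκpos
  have hrqmem : rq ∈ Set.Icc (0:ℝ) 1 := by
    constructor
    · rw [hrq]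
      exact div_nonneg (mul_nonneg (Real.rpow_nonneg hr.1 ω) hκpos.le) hcpos.le
    · rw [hrq, div_le_one hcpos, hc]
      have : 0 ≤ (1 - r) ^ ω := Real.rpow_nonneg (by linarith [hr.2]) ω
      linarith
  have hcomp : (1 - r) ^ ω = c * (1 - rq) := by
    rw [hrq]
    field_simp
    linarith [hc]

  refine ⟨hcpos, hrqmem, hcomp, fun x => ?_⟩
  have hcrq : c * rq = r ^ ω * κ := by
    rw [hrq]; field_simp
  -- det of scaled matrix
  have hdets : (ω⁻¹ • P).det = (ω⁻¹) ^ n * P.det := by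
    simp [Matrix.det_smul]
  have hBeq : (2 * Real.pi) ^ n * (ω⁻¹ • P).det = (2 * Real.pi / ω) ^ n * P.det := by
    rw [hdets, div_pow]
    field_simp
    rw [← mul_pow, one_div, inv_mul_cancel₀ hω0.ne', one_pow]
  -- inverse of scaled matrix
  have hPinv : (ω⁻¹ • P)⁻¹ = ω • P⁻¹ := by
    apply Matrix.inv_eq_right_inv
    rw [Matrix.smul_mul, Matrix.mul_smul, P.mul_nonsing_inv (isUnit_iff_ne_zero.2 hdet.ne'), smul_smul]
    simp [inv_mul_cancel₀ hω0.ne']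
  set t : ℝ := (x - m) ⬝ᵥ (P⁻¹ *ᵥ (x - m)) with ht
  have hquad : (x - m) ⬝ᵥ ((ω⁻¹ • P)⁻¹ *ᵥ (x - m)) = ω * t := by
    rw [hPinv, Matrix.smul_mulVec, dotProduct_smul, ht]
    simp [smul_eq_mul]
  rw [hcrq]
  unfold gaussianPDF
  rw [hBeq, hquad, hκ, kappa]
  have hgnn : 0 ≤ ((2 * Real.pi) ^ n * P.det) ^ (-(1:ℝ) / 2) :=
    Real.rpow_nonneg hA.le _
  rw [Real.mul_rpow hr.1 (mul_nonneg hgnn (Real.exp_nonneg _)),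
    Real.mul_rpow hgnn (Real.exp_nonneg _),
    ← Real.rpow_mul hA.le, ← Real.exp_mul]
  have hκeq : (((2 * Real.pi / ω) ^ n * P.det) ^ ((1:ℝ)/2) /
      ((2 * Real.pi) ^ n * P.det) ^ (ω / 2)) *
      ((2 * Real.pi / ω) ^ n * P.det) ^ (-(1:ℝ)/2) =
      ((2 * Real.pi) ^ n * P.det) ^ ((-1:ℝ)/2 * ω) := by
    rw [div_mul_eq_mul_div, ← Real.rpow_add hB]
    norm_num
    rw [show (-((1:ℝ)/2 * ω)) = -(ω/2) by ring, Real.rpow_neg hA.le]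
  rw [show (-(1/2:ℝ) * t * ω) = -(1/2) * (ω * t) by ring, ← hκeq]
  ring
end

section
/- Let r ∈ [0,1], let p : ℝⁿ → ℝ be a nonnegative measurable function with ∫ p = 1, and let λ : ℝⁿ → ℝ be a nonnegative measurable function (an intensity). Assume ⟨p,λ⟩ := ∫ p(x)·λ(x) dx is finite and positive, and define ρ := 1 − r + r·⟨p,λ⟩, r₀ := r·⟨p,λ⟩ / ρ, and p₀(x) := p(x)·λ(x) / ⟨p,λ⟩. Then: (i) ρ > 0; (ii) 1 − r = ρ·(1−r₀); (iii) for every x, r·p(x)·λ(x) = ρ · r₀ · p₀(x); (iv) r₀ ∈ [0,1]; and (v) ∫ p₀(x) dx = 1. That is, fusing a Bernoulli component with a Poisson point process intensity λ yields ρ times the Bernoulli density with existence probability r₀ and single-object density p₀. -/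
open MeasureTheory

/-- Bernoulli–Poisson fusion: fusing a Bernoulli component with a Poisson point process
intensity `lam` yields `ρ` times the Bernoulli density with existence probability `r₀`
and single-object density `p₀`. -/
theorem bernoulli_poisson_fusion {n : ℕ} (r : ℝ) (hr : r ∈ Set.Icc (0 : ℝ) 1)
    (p lam : (Fin n → ℝ) → ℝ)
    (hp_meas : Measurable p) (hlam_meas : Measurable lam)
    (hp_nn : ∀ x, 0 ≤ p x) (hlam_nn : ∀ x, 0 ≤ lam x)
    (hp_int : ∫ x, p x = 1)
    (hprod_int : Integrable fun x => p x * lam x)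
    (ip ρ r₀ : ℝ) (p₀ : (Fin n → ℝ) → ℝ)
    (hip : ip = ∫ x, p x * lam x) (hip_pos : 0 < ip)
    (hρ : ρ = 1 - r + r * ip)
    (hr₀ : r₀ = r * ip / ρ)
    (hp₀ : p₀ = fun x => p x * lam x / ip) :
    0 < ρ ∧
    1 - r = ρ * (1 - r₀) ∧
    (∀ x, r * p x * lam x = ρ * r₀ * p₀ x) ∧
    r₀ ∈ Set.Icc (0 : ℝ) 1 ∧
    (∫ x, p₀ x) = 1 := by
  obtain ⟨hr0, hr1⟩ := hr
  have hρ_pos : 0 < ρ := by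
    rcases eq_or_lt_of_le hr1 with h | h
    · subst hρ; nlinarith
    · subst hρ; nlinarith [mul_nonneg hr0 hip_pos.le]
  refine ⟨hρ_pos, ?_, ?_, ?_, ?_⟩
  · rw [hr₀]; field_simp; linarith [hρ]
  · intro x
    subst hp₀ hr₀
    field_simp
  · constructor
    · rw [hr₀]
      exact div_nonneg (mul_nonneg hr0 hip_pos.le) hρ_pos.le
    · rw [hr₀, div_le_one hρ_pos]
      nlinarith
  · subst hp₀
    simp only
    rw [integral_div, ← hip, div_self hip_pos.ne']
end
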